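/- Let D be a real n×n matrix and let M = D + Dᵀ. Let v₀ be a unit eigenvector of the symmetric matrix M associated with its largest eigenvalue. Then for every unit vector v in ℝⁿ, ‖(2·v₀v₀ᵀ − I) − D‖_F ≤ ‖(2·vvᵀ − I) − D‖_F; that is, v₀ solves the problem of minimizing ‖(2·vvᵀ − I) − D‖_F over unit vectors v. -/

import Mathlib

open Matrix

/-- The Frobenius norm of a real square matrix. -/
noncomputable def frobNorm {n : ℕ} (M : Matrix (Fin n) (Fin n) ℝ) : ℝ :=
  Real.sqrt (∑ i, ∑ j, (M i j) ^ 2)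

/-- Rayleigh quotient bound: if every eigenvalue of the symmetric matrix `M` is at most `μ`,
then `vᵀ M v ≤ μ` for every unit vector `v`. -/
theorem rayleigh_le (n : ℕ) (M : Matrix (Fin n) (Fin n) ℝ) (hM : M.IsHermitian) (μ : ℝ)
    (hmax : ∀ (μ' : ℝ) (w : Fin n → ℝ), w ≠ 0 → M *ᵥ w = μ' • w → μ' ≤ μ)
    (v : Fin n → ℝ) (hv : ∑ i, (v i) ^ 2 = 1) :
    v ⬝ᵥ M *ᵥ v ≤ μ := by
  set U : Matrix (Fin n) (Fin n) ℝ := (hM.eigenvectorUnitary : Matrix (Fin n) (Fin n) ℝ) with hUdef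
  set w : Fin n → ℝ := star U *ᵥ v with hw
  have hlam : ∀ i, hM.eigenvalues i ≤ μ := fun i =>
    hmax _ _ ((WithLp.ofLp_eq_zero 2).ne.2 (hM.eigenvectorBasis.orthonormal.ne_zero i)) (hM.mulVec_eigenvectorBasis i)
  have hdiag : v ⬝ᵥ M *ᵥ v = ∑ i, hM.eigenvalues i * (w i)^2 := by
    conv_lhs => rw [hM.spectral_theorem, Unitary.conjStarAlgAut_apply]
    rw [← mulVec_mulVec, ← mulVec_mulVec, dotProduct_mulVec]
    have hvU : v ᵥ* U = w := by
      rw [hw]; ext i; simp [vecMul, mulVec, dotProduct, conjTranspose, mul_comm]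
    rw [hvU]
    simp [mulVec_diagonal, dotProduct, Function.comp, mul_comm, sq, mul_assoc, mul_left_comm]
    rfl
  have hwnorm : ∑ i, (w i)^2 = 1 := by
    have h1 : ∑ i, (w i)^2 = w ⬝ᵥ w := by simp [dotProduct, sq]
    rw [h1, hw, dotProduct_mulVec, ← mulVec_transpose]
    have h2 : (star U)ᵀ = U := by ext i j; simp [conjTranspose]
    rw [h2, mulVec_mulVec]
    have hU : U * star U = 1 := Unitary.coe_mul_star_self hM.eigenvectorUnitary
    rw [hU, one_mulVec]
    simpa [dotProduct, sq] using hv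
  rw [hdiag]
  calc ∑ i, hM.eigenvalues i * (w i)^2 ≤ ∑ i, μ * (w i)^2 := by
        apply Finset.sum_le_sum
        intro i _
        exact mul_le_mul_of_nonneg_right (hlam i) (sq_nonneg _)
    _ = μ := by rw [← Finset.mul_sum, hwnorm, mul_one]

/-- Expansion of the squared Frobenius norm of `2 v vᵀ − I − D` for a unit vector `v`. -/
theorem frob_expand (n : ℕ) (D : Matrix (Fin n) (Fin n) ℝ)
    (v : Fin n → ℝ) (hv : ∑ i, (v i) ^ 2 = 1) :
    ∑ i, ∑ j, (((2 : ℝ) • Matrix.vecMulVec v v - 1 - D) i j)^2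
      = ((n : ℝ) + ∑ i, ∑ j, (D i j)^2 + 2 * ∑ i, D i i)
        - 2 * (v ⬝ᵥ (D + Dᵀ) *ᵥ v) := by
  have hq : v ⬝ᵥ (D + Dᵀ) *ᵥ v = 2 * ∑ i, ∑ j, v i * D i j * v j := by
    rw [add_mulVec, dotProduct_add]
    have h1 : v ⬝ᵥ Dᵀ *ᵥ v = v ⬝ᵥ D *ᵥ v := by
      rw [← vecMul_transpose, transpose_transpose, dotProduct_mulVec, dotProduct_comm]
    rw [h1, ← two_mul]
    congr 1
    simp [dotProduct, mulVec, Finset.mul_sum, mul_assoc]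
  rw [hq]
  have hentry : ∀ i j, (((2 : ℝ) • Matrix.vecMulVec v v - 1 - D) i j)^2
      = 4*(v i)^2*(v j)^2 - 4*(v i*v j)*(if i=j then (1:ℝ) else 0)
        + (if i=j then (1:ℝ) else 0) - 4*(v i * D i j * v j)
        + 2*(if i=j then (1:ℝ) else 0)*D i j + (D i j)^2 := by
    intro i j
    simp only [Matrix.sub_apply, Matrix.smul_apply, Matrix.vecMulVec_apply, Matrix.one_apply,
      smul_eq_mul]
    by_cases h : i = j <;> simp [h] <;> ring
  simp only [hentry]
  simp only [Finset.sum_add_distrib, Finset.sum_sub_distrib, ← Finset.mul_sum,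
    Finset.sum_ite_eq, Finset.mem_univ, if_true, mul_ite, mul_one, mul_zero]
  have hA1 : ∑ i, ∑ j, (4:ℝ)*(v i)^2*(v j)^2 = 4 := by
    have : ∑ i, ∑ j, (4:ℝ)*(v i)^2*(v j)^2 = 4 * ((∑ i, (v i)^2) * (∑ j, (v j)^2)) := by
      rw [Finset.sum_mul_sum]; simp [Finset.mul_sum, mul_assoc]
    rw [this, hv]; norm_num
  have hA2 : ∑ i : Fin n, ∑ j, (if i = j then (4:ℝ)*(v i*v j) else 0) = 4 := by
    simp only [Finset.sum_ite_eq, Finset.mem_univ, if_true]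
    have h := hv; simp only [pow_two] at h
    rw [← Finset.mul_sum, h, mul_one]
  have hvv : ∑ i, v i * v i = 1 := by have h := hv; simpa [pow_two] using h
  have hδ : ∑ x : Fin n, ∑ y : Fin n, (if x = y then (2:ℝ) else 0) * D x y
      = 2 * ∑ i, D i i := by
    simp [ite_mul, Finset.sum_ite_eq, Finset.mul_sum]
  rw [hv, hvv, hδ]
  simp only [mul_one, Finset.sum_const, Finset.card_univ, Fintype.card_fin, nsmul_eq_mul]
  rw [← Finset.mul_sum, hv]
  ring

/-- Let `M = D + Dᵀ` and let `v₀` be a unit eigenvector of the symmetric matrix `M`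
associated with its largest eigenvalue `μ`.  Then the Householder reflection
`2 v₀ v₀ᵀ − I` minimizes the Frobenius distance `‖(2 v vᵀ − I) − D‖_F` over all
unit vectors `v`. -/
theorem householder_frob_min (n : ℕ) (D : Matrix (Fin n) (Fin n) ℝ)
    (v₀ : Fin n → ℝ) (μ : ℝ)
    (hunit : ∑ i, (v₀ i) ^ 2 = 1)
    (heig : (D + Dᵀ).mulVec v₀ = μ • v₀)
    (hmax : ∀ (μ' : ℝ) (w : Fin n → ℝ), w ≠ 0 → (D + Dᵀ).mulVec w = μ' • w → μ' ≤ μ) :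
    ∀ v : Fin n → ℝ, ∑ i, (v i) ^ 2 = 1 →
      frobNorm ((2 : ℝ) • Matrix.vecMulVec v₀ v₀ - 1 - D) ≤
        frobNorm ((2 : ℝ) • Matrix.vecMulVec v v - 1 - D) := by
  intro v hv
  have hM : (D + Dᵀ).IsHermitian := by
    rw [Matrix.IsHermitian]
    ext i j
    simp [conjTranspose_apply, Matrix.add_apply, add_comm]
  have hray : v ⬝ᵥ (D + Dᵀ) *ᵥ v ≤ μ := rayleigh_le n (D + Dᵀ) hM μ hmax v hv
  have hray0 : v₀ ⬝ᵥ (D + Dᵀ) *ᵥ v₀ = μ := by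
    rw [heig, dotProduct_smul, smul_eq_mul]
    have : v₀ ⬝ᵥ v₀ = 1 := by simpa [dotProduct, sq] using hunit
    rw [this, mul_one]
  unfold frobNorm
  apply Real.sqrt_le_sqrt
  rw [frob_expand n D v₀ hunit, frob_expand n D v hv, hray0]
  linarith
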